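/- The affine map λ = T_{P'} ∘ T_P⁻¹ maps the conic 𝒞_P = ABCPQ to itself: for every quadratic polynomial q on ℝ² with nonzero coefficient vector vanishing at A, B, C, P, Q, and every Y ∈ ℝ² with q(Y) = 0, one also has q(T_{P'}(T_P⁻¹(Y))) = 0. -/

import Mathlib

noncomputable section

abbrev Pt := EuclideanSpace ℝ (Fin 2)

/-- The quadratic polynomial `a*x^2 + b*x*y + c*y^2 + d*x + e*y + f` evaluated at a point. -/
def qeval (a b c d e f : ℝ) (W : Pt) : ℝ :=
  a * (W 0)^2 + b * (W 0) * (W 1) + c * (W 1)^2 + d * (W 0) + e * (W 1) + f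

/-- Homogenized quadratic in barycentric-style coordinates. -/
def Hpoly (a b c d e f xA yA xB yB xC yC u v w : ℝ) : ℝ :=
  a*(u*xA+v*xB+w*xC)^2 + b*(u*xA+v*xB+w*xC)*(u*yA+v*yB+w*yC) + c*(u*yA+v*yB+w*yC)^2
  + d*(u*xA+v*xB+w*xC)*(u+v+w) + e*(u*yA+v*yB+w*yC)*(u+v+w) + f*(u+v+w)^2

lemma Hpoly_eval (a b c d e f : ℝ) (A B C : Pt) (u v w : ℝ) (h : u + v + w = 1) :
    qeval a b c d e f (u • A + v • B + w • C)
      = Hpoly a b c d e f (A 0) (A 1) (B 0) (B 1) (C 0) (C 1) u v w := by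
  have hw : w = 1 - u - v := by linarith
  subst hw
  simp only [qeval, Hpoly, PiLp.add_apply, PiLp.smul_apply, smul_eq_mul]
  ring

lemma Hpoly_decomp (a b c d e f xA yA xB yB xC yC u v w : ℝ) :
    Hpoly a b c d e f xA yA xB yB xC yC u v w =
      u^2 * Hpoly a b c d e f xA yA xB yB xC yC 1 0 0
    + v^2 * Hpoly a b c d e f xA yA xB yB xC yC 0 1 0
    + w^2 * Hpoly a b c d e f xA yA xB yB xC yC 0 0 1
    + v*w*(Hpoly a b c d e f xA yA xB yB xC yC 0 1 1
        - Hpoly a b c d e f xA yA xB yB xC yC 0 1 0 - Hpoly a b c d e f xA yA xB yB xC yC 0 0 1)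
    + u*w*(Hpoly a b c d e f xA yA xB yB xC yC 1 0 1
        - Hpoly a b c d e f xA yA xB yB xC yC 1 0 0 - Hpoly a b c d e f xA yA xB yB xC yC 0 0 1)
    + u*v*(Hpoly a b c d e f xA yA xB yB xC yC 1 1 0
        - Hpoly a b c d e f xA yA xB yB xC yC 1 0 0 - Hpoly a b c d e f xA yA xB yB xC yC 0 1 0) := by
  simp only [Hpoly]; ring

lemma Hpoly_homog (a b c d e f xA yA xB yB xC yC t u v w : ℝ) :
    Hpoly a b c d e f xA yA xB yB xC yC (t*u) (t*v) (t*w)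
      = t^2 * Hpoly a b c d e f xA yA xB yB xC yC u v w := by
  simp only [Hpoly]; ring

lemma map_comb (φ : Pt ≃ᵃ[ℝ] Pt) (A B C : Pt) (u v w : ℝ) (h : u + v + w = 1) :
    φ (u • A + v • B + w • C) = u • φ A + v • φ B + w • φ C := by
  have hw : w = 1 - u - v := by linarith
  subst hw
  have key : u • A + v • B + (1 - u - v) • C = (u • (A - C) + v • (B - C)) +ᵥ C := by
    simp only [vadd_eq_add]; module
  rw [key, AffineEquiv.map_vadd]
  have h1 : φ.linear (A - C) = φ A - φ C := by
    simpa using φ.toAffineMap.linearMap_vsub A C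
  have h2 : φ.linear (B - C) = φ B - φ C := by
    simpa using φ.toAffineMap.linearMap_vsub B C
  simp only [map_add, map_smul, h1, h2, vadd_eq_add]
  module

set_option maxHeartbeats 80000000 in
theorem stmt12
    (A B C : Pt) (hABC : AffineIndependent ℝ ![A, B, C])
    (α β γ : ℝ) (hsum : α + β + γ = 1)
    (hα : α ≠ 0) (hβ : β ≠ 0) (hγ : γ ≠ 0)
    (hβγ : β + γ ≠ 0) (hγα : γ + α ≠ 0) (hαβ : α + β ≠ 0)
    (hab : α ≠ β) (hbc : β ≠ γ) (hca : γ ≠ α)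
    (hs : α * β + β * γ + γ * α ≠ 0)
    (G : Pt) (hG : G = (3:ℝ)⁻¹ • (A + B + C))
    (P : Pt) (hP : P = α • A + β • B + γ • C)
    (P' : Pt)
    (hP'' : P' = (α * β + β * γ + γ * α)⁻¹ • ((β * γ) • A + (γ * α) • B + (α * β) • C))
    (Q : Pt) (hQ : Q = G - (2:ℝ)⁻¹ • (P' - G))
    (D E F : Pt)
    (hD : D = (β + γ)⁻¹ • (β • B + γ • C))
    (hE : E = (γ + α)⁻¹ • (α • A + γ • C))
    (hF : F = (α + β)⁻¹ • (α • A + β • B))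
    (D₃ E₃ F₃ : Pt)
    (hD₃ : D₃ = (β + γ)⁻¹ • (γ • B + β • C))
    (hE₃ : E₃ = (γ + α)⁻¹ • (γ • A + α • C))
    (hF₃ : F₃ = (α + β)⁻¹ • (β • A + α • B))
    (TP : Pt ≃ᵃ[ℝ] Pt) (hTPA : TP A = D) (hTPB : TP B = E) (hTPC : TP C = F)
    (TP' : Pt ≃ᵃ[ℝ] Pt) (hTP'A : TP' A = D₃) (hTP'B : TP' B = E₃) (hTP'C : TP' C = F₃)
    (a b c d e f : ℝ) (hq : (a, b, c, d, e, f) ≠ (0, 0, 0, 0, 0, 0))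
    (hqA : qeval a b c d e f A = 0) (hqB : qeval a b c d e f B = 0)
    (hqC : qeval a b c d e f C = 0) (hqP : qeval a b c d e f P = 0)
    (hqQ : qeval a b c d e f Q = 0)

    (Y : Pt) (hY : qeval a b c d e f Y = 0) :
    qeval a b c d e f (TP' (TP.symm Y)) = 0 := by
  -- barycentric coordinates of Y
  have htot : affineSpan ℝ (Set.range ![A, B, C]) = ⊤ := by
    rw [hABC.affineSpan_eq_top_iff_card_eq_finrank_add_one]
    simp [finrank_euclideanSpace_fin]
  obtain ⟨u, v, w, hsum1, hYr⟩ : ∃ u v w : ℝ, u + v + w = 1 ∧ u • A + v • B + w • C = Y := by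
    let bas : AffineBasis (Fin 3) ℝ Pt := ⟨![A, B, C], hABC, htot⟩
    refine ⟨bas.coord 0 Y, bas.coord 1 Y, bas.coord 2 Y, ?_, ?_⟩
    · have h := bas.sum_coord_apply_eq_one Y
      rw [Fin.sum_univ_three] at h
      exact h
    · have h := bas.linear_combination_coord_eq_self Y
      rw [Fin.sum_univ_three] at h
      have e0 : bas 0 = A := rfl
      have e1 : bas 1 = B := rfl
      have e2 : bas 2 = C := rfl
      rw [e0, e1, e2] at h
      exact h
  -- TP.symm on A, B, C
  have hA' : TP.symm A = (-(β+γ)/(2*α)) • A + ((γ+α)/(2*α)) • B + ((α+β)/(2*α)) • C := by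
    have hsA : (-(β+γ)/(2*α)) + ((γ+α)/(2*α)) + ((α+β)/(2*α)) = 1 := by
      field_simp; ring
    have h : TP ((-(β+γ)/(2*α)) • A + ((γ+α)/(2*α)) • B + ((α+β)/(2*α)) • C) = A := by
      rw [map_comb TP A B C _ _ _ hsA, hTPA, hTPB, hTPC, hD, hE, hF]
      match_scalars <;> field_simp <;> ring
    have h2 := congrArg TP.symm h
    rw [AffineEquiv.symm_apply_apply] at h2
    exact h2.symm
  have hB' : TP.symm B = ((β+γ)/(2*β)) • A + (-(γ+α)/(2*β)) • B + ((α+β)/(2*β)) • C := by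
    have hsB : ((β+γ)/(2*β)) + (-(γ+α)/(2*β)) + ((α+β)/(2*β)) = 1 := by
      field_simp; ring
    have h : TP (((β+γ)/(2*β)) • A + (-(γ+α)/(2*β)) • B + ((α+β)/(2*β)) • C) = B := by
      rw [map_comb TP A B C _ _ _ hsB, hTPA, hTPB, hTPC, hD, hE, hF]
      match_scalars <;> field_simp <;> ring
    have h2 := congrArg TP.symm h
    rw [AffineEquiv.symm_apply_apply] at h2
    exact h2.symm
  have hC' : TP.symm C = ((β+γ)/(2*γ)) • A + ((γ+α)/(2*γ)) • B + (-(α+β)/(2*γ)) • C := by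
    have hsC : ((β+γ)/(2*γ)) + ((γ+α)/(2*γ)) + (-(α+β)/(2*γ)) = 1 := by
      field_simp; ring
    have h : TP (((β+γ)/(2*γ)) • A + ((γ+α)/(2*γ)) • B + (-(α+β)/(2*γ)) • C) = C := by
      rw [map_comb TP A B C _ _ _ hsC, hTPA, hTPB, hTPC, hD, hE, hF]
      match_scalars <;> field_simp <;> ring
    have h2 := congrArg TP.symm h
    rw [AffineEquiv.symm_apply_apply] at h2
    exact h2.symm
  -- TP.symm Y
  obtain ⟨u1, hu1⟩ : ∃ x : ℝ, x = u*(-(β+γ)/(2*α)) + v*((β+γ)/(2*β)) + w*((β+γ)/(2*γ)) := ⟨_, rfl⟩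
  obtain ⟨v1, hv1⟩ : ∃ x : ℝ, x = u*((γ+α)/(2*α)) + v*(-(γ+α)/(2*β)) + w*((γ+α)/(2*γ)) := ⟨_, rfl⟩
  obtain ⟨w1, hw1⟩ : ∃ x : ℝ, x = u*((α+β)/(2*α)) + v*((α+β)/(2*β)) + w*(-(α+β)/(2*γ)) := ⟨_, rfl⟩
  have hstep1 : TP.symm Y = u1 • A + v1 • B + w1 • C := by
    rw [← hYr, map_comb TP.symm A B C u v w hsum1, hA', hB', hC', hu1, hv1, hw1]
    match_scalars <;> ring
  have hsum2 : u1 + v1 + w1 = 1 := by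
    have e : u1 + v1 + w1 = u + v + w := by
      rw [hu1, hv1, hw1]; field_simp; ring
    exact e.trans hsum1
  -- the final point
  obtain ⟨u2, hu2⟩ : ∃ x : ℝ, x = u*((β+γ)/(2*α)) + v*((β-γ)/(2*β)) + w*((γ-β)/(2*γ)) := ⟨_, rfl⟩
  obtain ⟨v2, hv2⟩ : ∃ x : ℝ, x = u*((α-γ)/(2*α)) + v*((γ+α)/(2*β)) + w*((γ-α)/(2*γ)) := ⟨_, rfl⟩
  obtain ⟨w2, hw2⟩ : ∃ x : ℝ, x = u*((α-β)/(2*α)) + v*((β-α)/(2*β)) + w*((α+β)/(2*γ)) := ⟨_, rfl⟩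
  have hstep2 : TP' (TP.symm Y) = u2 • A + v2 • B + w2 • C := by
    rw [hstep1, map_comb TP' A B C u1 v1 w1 hsum2, hTP'A, hTP'B, hTP'C, hD₃, hE₃, hF₃,
      hu1, hv1, hw1, hu2, hv2, hw2]
    match_scalars <;> field_simp <;> ring
  have hsum3 : u2 + v2 + w2 = 1 := by
    have e : u2 + v2 + w2 = u + v + w := by
      rw [hu2, hv2, hw2]; field_simp; ring
    exact e.trans hsum1
  -- Hpoly values at the five points and at Y
  have HA0 : Hpoly a b c d e f (A 0) (A 1) (B 0) (B 1) (C 0) (C 1) 1 0 0 = 0 := by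
    have h := Hpoly_eval a b c d e f A B C 1 0 0 (by norm_num)
    rw [one_smul, zero_smul, zero_smul, add_zero, add_zero] at h
    rw [← h]; exact hqA
  have HB0 : Hpoly a b c d e f (A 0) (A 1) (B 0) (B 1) (C 0) (C 1) 0 1 0 = 0 := by
    have h := Hpoly_eval a b c d e f A B C 0 1 0 (by norm_num)
    rw [zero_smul, one_smul, zero_smul, zero_add, add_zero] at h
    rw [← h]; exact hqB
  have HC0 : Hpoly a b c d e f (A 0) (A 1) (B 0) (B 1) (C 0) (C 1) 0 0 1 = 0 := by
    have h := Hpoly_eval a b c d e f A B C 0 0 1 (by norm_num)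
    rw [zero_smul, zero_smul, one_smul, zero_add, zero_add] at h
    rw [← h]; exact hqC
  have HP0 : Hpoly a b c d e f (A 0) (A 1) (B 0) (B 1) (C 0) (C 1) α β γ = 0 := by
    rw [← Hpoly_eval a b c d e f A B C α β γ hsum, ← hP]; exact hqP
  have hs2 : 2*(α*β + β*γ + γ*α) ≠ 0 := mul_ne_zero two_ne_zero hs
  have hS : α * β + α * γ + β * γ ≠ 0 := by contrapose! hs; linear_combination hs
  have hQr : Q = (α*(β+γ)/(2*(α*β+β*γ+γ*α))) • A + (β*(γ+α)/(2*(α*β+β*γ+γ*α))) • B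
      + (γ*(α+β)/(2*(α*β+β*γ+γ*α))) • C := by
    rw [hQ, hG, hP'']
    match_scalars <;> field_simp <;> linear_combination (-3) * mul_inv_cancel₀ hS
  have hsumq : (α*(β+γ)/(2*(α*β+β*γ+γ*α))) + (β*(γ+α)/(2*(α*β+β*γ+γ*α)))
      + (γ*(α+β)/(2*(α*β+β*γ+γ*α))) = 1 := by
    field_simp; linear_combination 2 * mul_inv_cancel₀ hS
  have HQfrac : Hpoly a b c d e f (A 0) (A 1) (B 0) (B 1) (C 0) (C 1)
      (α*(β+γ)/(2*(α*β+β*γ+γ*α))) (β*(γ+α)/(2*(α*β+β*γ+γ*α)))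
      (γ*(α+β)/(2*(α*β+β*γ+γ*α))) = 0 := by
    rw [← Hpoly_eval a b c d e f A B C _ _ _ hsumq, ← hQr]; exact hqQ
  have HQ0 : Hpoly a b c d e f (A 0) (A 1) (B 0) (B 1) (C 0) (C 1)
      (α*(β+γ)) (β*(γ+α)) (γ*(α+β)) = 0 := by
    have h := Hpoly_homog a b c d e f (A 0) (A 1) (B 0) (B 1) (C 0) (C 1)
      (2*(α*β+β*γ+γ*α)) (α*(β+γ)/(2*(α*β+β*γ+γ*α))) (β*(γ+α)/(2*(α*β+β*γ+γ*α)))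
      (γ*(α+β)/(2*(α*β+β*γ+γ*α)))
    rw [HQfrac, mul_zero] at h
    have e1 : 2*(α*β+β*γ+γ*α)*(α*(β+γ)/(2*(α*β+β*γ+γ*α))) = α*(β+γ) := by field_simp; exact div_self (by contrapose! hs; linear_combination hs)
    have e2 : 2*(α*β+β*γ+γ*α)*(β*(γ+α)/(2*(α*β+β*γ+γ*α))) = β*(γ+α) := by field_simp; exact div_self (by contrapose! hs; linear_combination hs)
    have e3 : 2*(α*β+β*γ+γ*α)*(γ*(α+β)/(2*(α*β+β*γ+γ*α))) = γ*(α+β) := by field_simp; exact div_self (by contrapose! hs; linear_combination hs)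
    rw [e1, e2, e3] at h
    exact h
  have HY0 : Hpoly a b c d e f (A 0) (A 1) (B 0) (B 1) (C 0) (C 1) u v w = 0 := by
    rw [← Hpoly_eval a b c d e f A B C u v w hsum1, hYr]; exact hY
  -- the three mixed coefficients
  obtain ⟨pp, hpp⟩ : ∃ x : ℝ, x = Hpoly a b c d e f (A 0) (A 1) (B 0) (B 1) (C 0) (C 1) 0 1 1 := ⟨_, rfl⟩
  obtain ⟨qq, hqq⟩ : ∃ x : ℝ, x = Hpoly a b c d e f (A 0) (A 1) (B 0) (B 1) (C 0) (C 1) 1 0 1 := ⟨_, rfl⟩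
  obtain ⟨rr, hrr⟩ : ∃ x : ℝ, x = Hpoly a b c d e f (A 0) (A 1) (B 0) (B 1) (C 0) (C 1) 1 1 0 := ⟨_, rfl⟩
  have dP := Hpoly_decomp a b c d e f (A 0) (A 1) (B 0) (B 1) (C 0) (C 1) α β γ
  rw [HP0, HA0, HB0, HC0, ← hpp, ← hqq, ← hrr] at dP
  have E1 : β*γ*pp + α*γ*qq + α*β*rr = 0 := by linear_combination -dP
  have dQ := Hpoly_decomp a b c d e f (A 0) (A 1) (B 0) (B 1) (C 0) (C 1)
    (α*(β+γ)) (β*(γ+α)) (γ*(α+β))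
  rw [HQ0, HA0, HB0, HC0, ← hpp, ← hqq, ← hrr] at dQ
  have E2 : (β*(γ+α))*(γ*(α+β))*pp + (α*(β+γ))*(γ*(α+β))*qq + (α*(β+γ))*(β*(γ+α))*rr = 0 := by
    linear_combination -dQ
  have dY := Hpoly_decomp a b c d e f (A 0) (A 1) (B 0) (B 1) (C 0) (C 1) u v w
  rw [HY0, HA0, HB0, HC0, ← hpp, ← hqq, ← hrr] at dY
  have EY : v*w*pp + u*w*qq + u*v*rr = 0 := by linear_combination -dY
  -- proportionality to the canonical conic coefficients
  have habg : α*β*γ ≠ 0 := mul_ne_zero (mul_ne_zero hα hβ) hγ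
  have hP0ne : α*(β+γ)*(γ-β) ≠ 0 :=
    mul_ne_zero (mul_ne_zero hα hβγ) (sub_ne_zero.mpr (Ne.symm hbc))
  have hpq : pp*(β*(γ+α)*(α-γ)) = qq*(α*(β+γ)*(γ-β)) := by
    apply mul_left_cancel₀ habg
    linear_combination (α*β)*E2 - (α*β*(β+γ)*(γ+α))*E1
  have hpr : pp*(γ*(α+β)*(β-α)) = rr*(α*(β+γ)*(γ-β)) := by
    apply mul_left_cancel₀ habg
    linear_combination (-(α*γ))*E2 + (α*γ*(β+γ)*(α+β))*E1
  obtain ⟨t, htdef⟩ : ∃ x : ℝ, x = pp/(α*(β+γ)*(γ-β)) := ⟨_, rfl⟩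
  have hppt : pp = t*(α*(β+γ)*(γ-β)) := by
    rw [htdef, div_mul_eq_mul_div, eq_div_iff hP0ne]
  have hqqt : qq = t*(β*(γ+α)*(α-γ)) := by
    rw [htdef, div_mul_eq_mul_div, eq_div_iff hP0ne]
    linear_combination -hpq
  have hrrt : rr = t*(γ*(α+β)*(β-α)) := by
    rw [htdef, div_mul_eq_mul_div, eq_div_iff hP0ne]
    linear_combination -hpr
  -- the invariance identity
  have KEY : α*(β+γ)*(γ-β)*(v2*w2) + β*(γ+α)*(α-γ)*(u2*w2) + γ*(α+β)*(β-α)*(u2*v2)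
      = α*(β+γ)*(γ-β)*(v*w) + β*(γ+α)*(α-γ)*(u*w) + γ*(α+β)*(β-α)*(u*v) := by
    rw [hu2, hv2, hw2]; field_simp; ring
  -- finish
  rw [hstep2, Hpoly_eval a b c d e f A B C u2 v2 w2 hsum3]
  have dF := Hpoly_decomp a b c d e f (A 0) (A 1) (B 0) (B 1) (C 0) (C 1) u2 v2 w2
  rw [HA0, HB0, HC0, ← hpp, ← hqq, ← hrr] at dF
  rw [dF, hppt, hqqt, hrrt]
  rw [hppt, hqqt, hrrt] at EY
  linear_combination EY + t*KEY
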